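/- Let n ≥ 1, s ≥ 0, τ > 0, κ(τ) = 1 − e^{−τ}, and let S₀(τ) be as above. Then for every Schwartz f, ‖S₀(τ)f‖_{Ḣ^{s+1}(ℝⁿ)} ≲ e^{(1/2)(n/2 − 2 − s)τ} κ(τ)^{−1/2} ‖f‖_{Ḣ^s(ℝⁿ)}, with implicit constant depending only on n. (Smoothing estimate: the semigroup gains one derivative at the cost of a factor κ(τ)^{−1/2}.) -/

import Mathlib

open MeasureTheory

noncomputable section

/-- The heat kernel H_t(x) = (4πt)^{−n/2} e^{−|x|²/(4t)}. -/
def heatK (n : ℕ) (t : ℝ) (x : EuclideanSpace ℝ (Fin n)) : ℝ :=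
  (4 * Real.pi * t) ^ (-(n : ℝ) / 2) * Real.exp (-‖x‖ ^ 2 / (4 * t))

/-- The free semigroup [S₀(τ)f](x) = e^{−τ/2}(H_{κ(τ)} ∗ f)(e^{−τ/2}x), κ(τ) = 1 − e^{−τ}. -/
def S0 (n : ℕ) (τ : ℝ) (f : EuclideanSpace ℝ (Fin n) → ℂ)
    (x : EuclideanSpace ℝ (Fin n)) : ℂ :=
  Real.exp (-τ / 2) * ∫ y : EuclideanSpace ℝ (Fin n),
    ((heatK n (1 - Real.exp (-τ)) (Real.exp (-τ / 2) • x - y) : ℝ) : ℂ) * f y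

/-- Ḣ^s norm. -/
def hnorm (n : ℕ) (s : ℝ) (f : EuclideanSpace ℝ (Fin n) → ℂ) : ℝ :=
  (∫ ξ : EuclideanSpace ℝ (Fin n),
    ‖ξ‖ ^ (2 * s) * ‖FourierTransform.fourier f ξ‖ ^ 2) ^ ((1 : ℝ) / 2)

end

noncomputable section Aux

open FourierTransform Real Complex

variable {n : ℕ}

lemma exp_bound' {c u : ℝ} (hc : 0 < c) (hu : 0 ≤ u) :
    u * Real.exp (-(8 * π ^ 2 * c * u)) ≤ c⁻¹ := by
  rcases eq_or_lt_of_le hu with h | h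
  · simp [← h]; positivity
  · have h9 : (1:ℝ) ≤ 8 * π ^ 2 := by nlinarith [Real.pi_gt_three]
    have h1 : c * u ≤ Real.exp (8 * π ^ 2 * c * u) := by
      have h2 : (8 * π ^ 2 * c * u) + 1 ≤ Real.exp (8 * π ^ 2 * c * u) := Real.add_one_le_exp _
      nlinarith [mul_pos hc h]
    rw [Real.exp_neg, mul_inv_le_iff₀ (Real.exp_pos _), inv_mul_eq_div, le_div_iff₀ hc]
    nlinarith

lemma schwartz_weight_integrable (n : ℕ) {p : ℝ} (hp : 0 ≤ p)
    (g : SchwartzMap (EuclideanSpace ℝ (Fin n)) ℂ) :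
    Integrable (fun η : EuclideanSpace ℝ (Fin n) ↦ ‖η‖ ^ p * ‖g η‖ ^ 2) := by
  set k := ⌈p⌉₊ with hk
  set M := (SchwartzMap.seminorm ℝ 0 0) g with hM
  have hM0 : 0 ≤ M := apply_nonneg _ _
  have hDint : Integrable (fun η : EuclideanSpace ℝ (Fin n) ↦
      M * (‖g η‖ + ‖η‖ ^ k * ‖g η‖)) volume :=
    ((g.integrable.norm.add (g.integrable_pow_mul volume k))).const_mul M
  refine hDint.mono' ?_ (Filter.Eventually.of_forall fun η => ?_)
  · apply Measurable.aestronglyMeasurable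
    have : Measurable fun η : EuclideanSpace ℝ (Fin n) => ‖η‖ ^ p := by measurability
    exact this.mul ((g.continuous.norm.pow 2).measurable)
  · have h1 : ‖η‖ ^ p ≤ 1 + ‖η‖ ^ k := by
      rcases le_total ‖η‖ 1 with h | h
      · have := Real.rpow_le_one (norm_nonneg η) h hp
        have := pow_nonneg (norm_nonneg η) k
        linarith
      · calc ‖η‖ ^ p ≤ ‖η‖ ^ (k : ℝ) :=
              Real.rpow_le_rpow_of_exponent_le h (Nat.le_ceil p)
          _ = ‖η‖ ^ k := Real.rpow_natCast _ _
          _ ≤ 1 + ‖η‖ ^ k := by linarith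
    have h2 : ‖g η‖ ≤ M := SchwartzMap.norm_le_seminorm ℝ g η
    have h3 : (0:ℝ) ≤ ‖η‖ ^ p := Real.rpow_nonneg (norm_nonneg _) _
    rw [Real.norm_of_nonneg (by positivity)]
    calc ‖η‖ ^ p * ‖g η‖ ^ 2 ≤ (1 + ‖η‖ ^ k) * (M * ‖g η‖) := by
          rw [sq]
          apply mul_le_mul h1 (by nlinarith [norm_nonneg (g η)]) (by positivity) (by positivity)
      _ = M * (‖g η‖ + ‖η‖ ^ k * ‖g η‖) := by ring

lemma fourier_const_mul (c : ℂ) (h : EuclideanSpace ℝ (Fin n) → ℂ) (ξ : EuclideanSpace ℝ (Fin n)) :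
    𝓕 (fun x => c * h x) ξ = c * 𝓕 h ξ := by
  simp_rw [Real.fourier_eq', smul_eq_mul, ← integral_const_mul]
  congr 1; ext v; ring

lemma fourier_scale (h : EuclideanSpace ℝ (Fin n) → ℂ) {a : ℝ} (ha : 0 < a)
    (ξ : EuclideanSpace ℝ (Fin n)) :
    𝓕 (fun x => h (a • x)) ξ = ((a ^ n : ℝ)⁻¹ : ℂ) * 𝓕 h (a⁻¹ • ξ) := by
  have key := Measure.integral_comp_smul (μ := volume)
    (fun y : EuclideanSpace ℝ (Fin n) =>
      Complex.exp ((-2 * π * (inner ℝ (a⁻¹ • y) ξ : ℝ) : ℝ) * Complex.I) • h y) a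
  have inner_eq : ∀ y : EuclideanSpace ℝ (Fin n),
      (inner ℝ (a⁻¹ • y) ξ : ℝ) = (inner ℝ y (a⁻¹ • ξ) : ℝ) := fun y => by
    rw [real_inner_smul_left, real_inner_smul_right]
  simp only [smul_smul, inv_mul_cancel₀ ha.ne', one_smul, inner_eq] at key
  rw [Real.fourier_eq', Real.fourier_eq']
  rw [key, finrank_euclideanSpace_fin, _root_.abs_of_nonneg (by positivity), real_smul]
  push_cast
  ring

lemma heatK_complex (t : ℝ) (x : EuclideanSpace ℝ (Fin n)) :
    ((heatK n t x : ℝ) : ℂ) =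
      (((4 * π * t) ^ (-(n : ℝ) / 2) : ℝ) : ℂ) *
        Complex.exp (-(((4 * t)⁻¹ : ℝ) : ℂ) * (‖x‖ : ℂ) ^ 2) := by
  rw [heatK, Complex.ofReal_mul]
  congr 1
  rw [show -(((4 * t)⁻¹ : ℝ) : ℂ) * (‖x‖ : ℂ) ^ 2 = ((-‖x‖ ^ 2 / (4 * t) : ℝ) : ℂ) by
    push_cast; ring]
  rw [← Complex.ofReal_exp]

lemma fourier_heatK {t : ℝ} (ht : 0 < t) (ξ : EuclideanSpace ℝ (Fin n)) :
    𝓕 (fun x : EuclideanSpace ℝ (Fin n) => ((heatK n t x : ℝ) : ℂ)) ξ =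
      ((Real.exp (-(4 * π ^ 2 * t * ‖ξ‖ ^ 2)) : ℝ) : ℂ) := by
  have h4t : (0:ℝ) < 4 * π * t := by positivity
  have hb : (0:ℝ) < (4 * t)⁻¹ := by positivity
  simp_rw [heatK_complex]
  rw [fourier_const_mul]
  rw [fourier_gaussian_innerProductSpace (by simpa using hb) ξ]
  rw [finrank_euclideanSpace_fin]
  have hπb : (↑π / (((4 * t)⁻¹ : ℝ) : ℂ)) = ((4 * π * t : ℝ) : ℂ) := by
    push_cast
    field_simp
  rw [hπb]
  have hc : (((4 * π * t) ^ (-(n : ℝ) / 2) : ℝ) : ℂ)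
      = ((4 * π * t : ℝ) : ℂ) ^ ((-(n : ℝ) / 2 : ℝ) : ℂ) :=
    Complex.ofReal_cpow h4t.le _
  rw [hc, ← mul_assoc, ← Complex.cpow_add _ _ (by exact_mod_cast h4t.ne')]
  have hexp : ((-(n : ℝ) / 2 : ℝ) : ℂ) + ((n : ℕ) : ℂ) / 2 = 0 := by push_cast; ring
  rw [hexp, Complex.cpow_zero, one_mul]
  have harg : -(π:ℂ) ^ 2 * (‖ξ‖:ℂ) ^ 2 / (((4 * t)⁻¹ : ℝ) : ℂ)
      = ((-(4 * π ^ 2 * t * ‖ξ‖ ^ 2) : ℝ) : ℂ) := by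
    push_cast
    field_simp
  rw [harg, Complex.ofReal_exp]

lemma fourier_conv (g : EuclideanSpace ℝ (Fin n) → ℂ) (hgi : Integrable g)
    (hgc : Continuous g) (f : SchwartzMap (EuclideanSpace ℝ (Fin n)) ℂ)
    (ξ : EuclideanSpace ℝ (Fin n)) :
    𝓕 (fun x => ∫ y, g (x - y) * f y) ξ = 𝓕 g ξ * 𝓕 f ξ := by
  set K : EuclideanSpace ℝ (Fin n) → ℂ :=
    fun x => Complex.exp ((-2 * π * (inner ℝ x ξ : ℝ) : ℝ) * Complex.I) with hKdef
  have hKcont : Continuous K := by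
    apply Complex.continuous_exp.comp
    refine Continuous.mul (Complex.continuous_ofReal.comp ?_) continuous_const
    exact (continuous_const.mul (continuous_inner.comp
      (continuous_id.prodMk continuous_const)))
  have hKnorm : ∀ x, ‖K x‖ = 1 := fun x => Complex.norm_exp_ofReal_mul_I _
  have hKadd : ∀ x y, K (x + y) = K x * K y := by
    intro x y
    simp only [hKdef]
    rw [← Complex.exp_add]
    congr 1
    rw [inner_add_left]
    push_cast
    ring
  have hconv : Integrable (fun p : (EuclideanSpace ℝ (Fin n)) × (EuclideanSpace ℝ (Fin n)) =>
      (f p.2) * g (p.1 - p.2)) (volume.prod volume) :=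
    Integrable.convolution_integrand (ContinuousLinearMap.mul ℂ ℂ) f.integrable hgi
  have hFi : Integrable (Function.uncurry fun x y => K x * (g (x - y) * f y))
      (volume.prod volume) := by
    refine hconv.norm.mono' ?_ (Filter.Eventually.of_forall fun p => ?_)
    · apply Continuous.aestronglyMeasurable
      exact (hKcont.comp continuous_fst).mul
        ((hgc.comp (continuous_fst.sub continuous_snd)).mul
          (f.continuous.comp continuous_snd))
    · simp only [Function.uncurry, norm_mul, hKnorm, one_mul, norm_norm]
      rw [mul_comm ‖g _‖]
  rw [Real.fourier_eq']
  simp_rw [smul_eq_mul, ← integral_const_mul]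
  rw [integral_integral_swap hFi]
  have inner_eq : ∀ y : EuclideanSpace ℝ (Fin n),
      (∫ x, K x * (g (x - y) * f y)) = (K y * 𝓕 g ξ) * f y := by
    intro y
    have h1 : (∫ x, K x * (g (x - y) * f y)) = (∫ x, K x * g (x - y)) * f y := by
      simp_rw [← mul_assoc]
      exact integral_mul_const _ _
    have h2 : (∫ x, K x * g (x - y)) = K y * 𝓕 g ξ := by
      have h3 := integral_add_right_eq_self (μ := volume)
        (fun z => K z * g (z - y)) y
      simp only [add_sub_cancel_right] at h3
      rw [← h3]
      simp_rw [hKadd, mul_comm (K _) (K y), mul_assoc, integral_const_mul]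
      congr 1
      rw [Real.fourier_eq']
      simp_rw [smul_eq_mul]
      rfl
    rw [h1, h2]
  simp_rw [inner_eq]
  have rearr : ∀ y : EuclideanSpace ℝ (Fin n),
      K y * 𝓕 g ξ * f y = 𝓕 g ξ * (K y * f y) := fun y => by ring
  simp_rw [rearr, integral_const_mul]
  congr 1
  rw [SchwartzMap.fourier_coe, Real.fourier_eq']
  simp_rw [smul_eq_mul]
  rfl

lemma heatK_cont (t : ℝ) :
    Continuous fun x : EuclideanSpace ℝ (Fin n) => ((heatK n t x : ℝ) : ℂ) := by
  apply Complex.continuous_ofReal.comp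
  unfold heatK
  fun_prop

lemma heatK_integrable {t : ℝ} (ht : 0 < t) :
    Integrable (fun x : EuclideanSpace ℝ (Fin n) => ((heatK n t x : ℝ) : ℂ)) := by
  simp_rw [heatK_complex]
  apply Integrable.const_mul
  have hb : (0:ℂ).re < ((((4 * t)⁻¹ : ℝ) : ℂ)).re := by
    simpa using (by positivity : (0:ℝ) < (4 * t)⁻¹)
  have := GaussianFourier.integrable_cexp_neg_mul_sq_norm_add
    (V := EuclideanSpace ℝ (Fin n)) (b := (((4 * t)⁻¹ : ℝ) : ℂ)) (by simpa using hb) 0 0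
  simpa using this

lemma fourier_S0 {τ : ℝ} (hτ : 0 < τ) (f : SchwartzMap (EuclideanSpace ℝ (Fin n)) ℂ)
    (ξ : EuclideanSpace ℝ (Fin n)) :
    𝓕 (S0 n τ f) ξ =
      ((Real.exp (-τ / 2) : ℝ) : ℂ) * ((((Real.exp (-τ / 2)) ^ n : ℝ)⁻¹ : ℂ) *
        (((Real.exp (-(4 * π ^ 2 * (1 - Real.exp (-τ)) *
            ‖(Real.exp (-τ / 2))⁻¹ • ξ‖ ^ 2)) : ℝ) : ℂ) *
          𝓕 f ((Real.exp (-τ / 2))⁻¹ • ξ))) := by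
  have ha : (0:ℝ) < Real.exp (-τ / 2) := Real.exp_pos _
  have hκ : (0:ℝ) < 1 - Real.exp (-τ) := by
    have : Real.exp (-τ) < 1 := Real.exp_lt_one_iff.mpr (by linarith)
    linarith
  have hS0 : S0 n τ f = fun x => ((Real.exp (-τ / 2) : ℝ) : ℂ) *
      (fun z => ∫ y, ((heatK n (1 - Real.exp (-τ)) (z - y) : ℝ) : ℂ) * f y)
        (Real.exp (-τ / 2) • x) := rfl
  rw [hS0, fourier_const_mul, fourier_scale
      (fun z => ∫ y, ((heatK n (1 - Real.exp (-τ)) (z - y) : ℝ) : ℂ) * f y) ha ξ,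
    fourier_conv _ (heatK_integrable hκ) (heatK_cont _) f, fourier_heatK hκ]

end Aux

/-- Smoothing estimate: the free semigroup gains one derivative at the cost of κ(τ)^{−1/2}. -/
theorem S0_smoothing (n : ℕ) (hn : 1 ≤ n) (s : ℝ) (hs : 0 ≤ s) :
    ∃ C > (0 : ℝ), ∀ τ : ℝ, 0 < τ →
      ∀ f : SchwartzMap (EuclideanSpace ℝ (Fin n)) ℂ,
        hnorm n (s + 1) (S0 n τ f) ≤
          C * Real.exp ((1 / 2) * ((n : ℝ) / 2 - 2 - s) * τ) *
            (1 - Real.exp (-τ)) ^ (-(1 : ℝ) / 2) * hnorm n s f := by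
  refine ⟨1, one_pos, fun τ hτ f => ?_⟩
  have ha : (0:ℝ) < Real.exp (-τ / 2) := Real.exp_pos _
  set a : ℝ := Real.exp (-τ / 2) with haa
  have hκ : (0:ℝ) < 1 - Real.exp (-τ) := by
    have : Real.exp (-τ) < 1 := Real.exp_lt_one_iff.mpr (by linarith)
    linarith
  set κ : ℝ := 1 - Real.exp (-τ) with hκκ
  set Ψ : EuclideanSpace ℝ (Fin n) → ℝ := fun η =>
    ‖a • η‖ ^ (2 * (s + 1)) *
      (a * (a ^ n)⁻¹ * Real.exp (-(4 * Real.pi ^ 2 * κ * ‖η‖ ^ 2)) *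
        ‖FourierTransform.fourier (⇑f) η‖) ^ 2 with hΨ
  -- pointwise identity for the transformed integrand
  have hpt : ∀ ξ, ‖ξ‖ ^ (2 * (s + 1)) * ‖FourierTransform.fourier (S0 n τ ⇑f) ξ‖ ^ 2
      = Ψ (a⁻¹ • ξ) := by
    intro ξ
    have hsm : a • a⁻¹ • ξ = ξ := by rw [smul_smul, mul_inv_cancel₀ ha.ne', one_smul]
    rw [hΨ]
    dsimp only
    rw [hsm, fourier_S0 hτ f ξ]
    simp only [norm_mul, norm_inv, Complex.norm_real, Real.norm_eq_abs,
      _root_.abs_of_nonneg ha.le, _root_.abs_of_nonneg (Real.exp_nonneg _),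
      _root_.abs_of_nonneg (pow_nonneg ha.le n), abs_pow, SchwartzMap.fourier_coe]
    rw [← haa, ← hκκ]
    ring
  -- scaling of the integral
  have hscale : (∫ ξ, Ψ (a⁻¹ • ξ)) = a ^ n * ∫ η, Ψ η := by
    have h := Measure.integral_comp_inv_smul_of_nonneg (μ := volume) Ψ ha.le
    rw [finrank_euclideanSpace_fin] at h
    simpa [smul_eq_mul] using h
  -- pointwise bound on Ψ
  set C' : ℝ := a ^ (2 * (s + 1)) * (a * (a ^ n)⁻¹) ^ 2 * κ⁻¹ with hC'
  have hΨle : ∀ η, Ψ η ≤ C' * (‖η‖ ^ (2 * s) * ‖FourierTransform.fourier (⇑f) η‖ ^ 2) := by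
    intro η
    rw [hΨ]
    dsimp only
    have hnorm_smul : ‖a • η‖ = a * ‖η‖ := by
      rw [norm_smul, Real.norm_eq_abs, _root_.abs_of_nonneg ha.le]
    rw [hnorm_smul, Real.mul_rpow ha.le (norm_nonneg _)]
    have hsplit : ‖η‖ ^ (2 * (s + 1)) = ‖η‖ ^ (2 * s) * ‖η‖ ^ 2 := by
      rw [show (2 * (s + 1) : ℝ) = 2 * s + 2 by ring,
        Real.rpow_add' (norm_nonneg _) (by positivity),
        show ((2:ℝ)) = ((2:ℕ) : ℝ) by norm_num, Real.rpow_natCast]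
    rw [hsplit]
    have key : ‖η‖ ^ 2 * Real.exp (-(4 * Real.pi ^ 2 * κ * ‖η‖ ^ 2)) ^ 2 ≤ κ⁻¹ := by
      rw [sq (Real.exp _), ← Real.exp_add,
        show (-(4 * Real.pi ^ 2 * κ * ‖η‖ ^ 2)) + (-(4 * Real.pi ^ 2 * κ * ‖η‖ ^ 2))
          = -(8 * Real.pi ^ 2 * κ * ‖η‖ ^ 2) by ring]
      exact exp_bound' hκ (sq_nonneg _)
    have hr0 : (0:ℝ) ≤ ‖η‖ ^ (2 * s) := Real.rpow_nonneg (norm_nonneg _) _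
    have ha2 : (0:ℝ) ≤ a ^ (2 * (s + 1)) := Real.rpow_nonneg ha.le _
    calc a ^ (2 * (s + 1)) * (‖η‖ ^ (2 * s) * ‖η‖ ^ 2) *
          (a * (a ^ n)⁻¹ * Real.exp (-(4 * Real.pi ^ 2 * κ * ‖η‖ ^ 2)) *
            ‖FourierTransform.fourier (⇑f) η‖) ^ 2
        = (a ^ (2 * (s + 1)) * (a * (a ^ n)⁻¹) ^ 2 *
            (‖η‖ ^ (2 * s) * ‖FourierTransform.fourier (⇑f) η‖ ^ 2)) *
            (‖η‖ ^ 2 * Real.exp (-(4 * Real.pi ^ 2 * κ * ‖η‖ ^ 2)) ^ 2) := by ring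
      _ ≤ (a ^ (2 * (s + 1)) * (a * (a ^ n)⁻¹) ^ 2 *
            (‖η‖ ^ (2 * s) * ‖FourierTransform.fourier (⇑f) η‖ ^ 2)) * κ⁻¹ := by
          apply mul_le_mul_of_nonneg_left key (by positivity)
      _ = C' * (‖η‖ ^ (2 * s) * ‖FourierTransform.fourier (⇑f) η‖ ^ 2) := by
          rw [hC']; ring
  -- integrability of the dominating function
  have hint : Integrable (fun η : EuclideanSpace ℝ (Fin n) =>
      ‖η‖ ^ (2 * s) * ‖FourierTransform.fourier (⇑f) η‖ ^ 2) := by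
    have h := schwartz_weight_integrable n (by positivity : (0:ℝ) ≤ 2 * s)
      (SchwartzMap.fourierTransformCLM ℝ f)
    simpa [SchwartzMap.fourierTransformCLM_apply, SchwartzMap.fourier_coe] using h
  set I₀ : ℝ := ∫ η, ‖η‖ ^ (2 * s) * ‖FourierTransform.fourier (⇑f) η‖ ^ 2 with hI₀
  have hI₀0 : 0 ≤ I₀ := integral_nonneg fun η => by positivity
  have hΨ0 : ∀ η, 0 ≤ Ψ η := fun η => by
    rw [hΨ]; dsimp only; positivity
  have hmono : (∫ η, Ψ η) ≤ C' * I₀ := by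
    rw [hI₀, ← integral_const_mul]
    exact integral_mono_of_nonneg (Filter.Eventually.of_forall hΨ0)
      (hint.const_mul C') (Filter.Eventually.of_forall hΨle)
  have hC'0 : 0 ≤ C' := by
    rw [hC']
    have := Real.rpow_nonneg ha.le (2 * (s + 1))
    positivity
  -- assemble
  have hI₁ : (∫ ξ, ‖ξ‖ ^ (2 * (s + 1)) * ‖FourierTransform.fourier (S0 n τ ⇑f) ξ‖ ^ 2)
      ≤ (a ^ n * C') * I₀ := by
    calc (∫ ξ, ‖ξ‖ ^ (2 * (s + 1)) * ‖FourierTransform.fourier (S0 n τ ⇑f) ξ‖ ^ 2)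
        = ∫ ξ, Ψ (a⁻¹ • ξ) := by simp_rw [hpt]
      _ = a ^ n * ∫ η, Ψ η := hscale
      _ ≤ a ^ n * (C' * I₀) :=
          mul_le_mul_of_nonneg_left hmono (pow_nonneg ha.le n)
      _ = (a ^ n * C') * I₀ := by ring
  have hI₁0 : (0:ℝ) ≤ ∫ ξ, ‖ξ‖ ^ (2 * (s + 1)) * ‖FourierTransform.fourier (S0 n τ ⇑f) ξ‖ ^ 2 :=
    integral_nonneg fun ξ => by positivity
  -- the constant
  have hT : a ^ n * C' = Real.exp (((n:ℝ) / 2 - 2 - s) * τ) * κ⁻¹ := by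
    have e1 : a ^ n = Real.exp ((n : ℝ) * (-τ / 2)) := by
      rw [haa, ← Real.exp_nat_mul]
    have e2 : a ^ (2 * (s + 1)) = Real.exp (-τ / 2 * (2 * (s + 1))) := by
      rw [haa, Real.rpow_def_of_pos (Real.exp_pos _), Real.log_exp]
    rw [hC', show a ^ n * (a ^ (2 * (s + 1)) * (a * (a ^ n)⁻¹) ^ 2 * κ⁻¹)
        = (a ^ n * a ^ (2 * (s + 1)) * (a * (a ^ n)⁻¹) ^ 2) * κ⁻¹ by ring]
    congr 1
    rw [e1, e2, haa, ← Real.exp_neg, ← Real.exp_add, sq, ← Real.exp_add, ← Real.exp_add,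
      ← Real.exp_add, Real.exp_eq_exp]
    ring
  have hT0 : (0:ℝ) ≤ Real.exp (((n:ℝ) / 2 - 2 - s) * τ) * κ⁻¹ := by positivity
  -- final estimate
  rw [show hnorm n (s + 1) (S0 n τ ⇑f)
      = (∫ ξ, ‖ξ‖ ^ (2 * (s + 1)) * ‖FourierTransform.fourier (S0 n τ ⇑f) ξ‖ ^ 2) ^ ((1:ℝ)/2)
      from rfl,
    show hnorm n s ⇑f = I₀ ^ ((1:ℝ)/2) from rfl]
  calc (∫ ξ, ‖ξ‖ ^ (2 * (s + 1)) * ‖FourierTransform.fourier (S0 n τ ⇑f) ξ‖ ^ 2) ^ ((1:ℝ)/2)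
      ≤ ((a ^ n * C') * I₀) ^ ((1:ℝ)/2) :=
        Real.rpow_le_rpow hI₁0 hI₁ (by norm_num)
    _ = (Real.exp (((n:ℝ) / 2 - 2 - s) * τ) * κ⁻¹) ^ ((1:ℝ)/2) * I₀ ^ ((1:ℝ)/2) := by
        rw [hT, Real.mul_rpow hT0 hI₀0]
    _ = Real.exp ((1 / 2) * ((n : ℝ) / 2 - 2 - s) * τ) * κ ^ (-(1:ℝ)/2) * I₀ ^ ((1:ℝ)/2) := by
        rw [Real.mul_rpow (Real.exp_nonneg _) (inv_nonneg.mpr hκ.le)]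
        congr 2
        · rw [Real.rpow_def_of_pos (Real.exp_pos _), Real.log_exp, Real.exp_eq_exp]
          ring
        · rw [Real.inv_rpow hκ.le, ← Real.rpow_neg hκ.le]
          norm_num
    _ = 1 * Real.exp ((1 / 2) * ((n : ℝ) / 2 - 2 - s) * τ) * κ ^ (-(1:ℝ)/2) *
          I₀ ^ ((1:ℝ)/2) := by ring
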